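/- Let k be a symmetric positive-semidefinite kernel on a type ι and σ > 0 a noise level. For any n, any observation points x : Fin n → ι, and any two points z₁, z₂ : ι, the Gaussian-process posterior covariance is dominated by the average of the posterior variances: 2 · k(z₁, z₂; x) ≤ σ²(z₁; x) + σ²(z₂; x). -/

import Mathlib

open Matrix

/-- The Gaussian-process posterior covariance `k(z, z'; x)` given observation
points `x : Fin n → ι` and noise level `σ`. -/
noncomputable def postCov {ι : Type*} (k : ι → ι → ℝ) (σ : ℝ) {n : ℕ}
    (x : Fin n → ι) (z z' : ι) : ℝ :=
  k z z' -
    dotProduct (fun i => k (x i) z)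
      (Matrix.mulVec
        ((Matrix.of (fun i j => k (x i) (x j)) + σ ^ 2 • (1 : Matrix (Fin n) (Fin n) ℝ))⁻¹)
        (fun i => k (x i) z'))

/-- The Gaussian-process posterior variance `σ²(z; x) = k(z, z; x)`. -/
noncomputable def postVar {ι : Type*} (k : ι → ι → ℝ) (σ : ℝ) {n : ℕ}
    (x : Fin n → ι) (z : ι) : ℝ :=
  postCov k σ x z z

theorem posterior_covariance_le_avg_variances
    {ι : Type*} (k : ι → ι → ℝ) (σ : ℝ)
    (hσ : 0 < σ)
    (hsymm : ∀ z z', k z z' = k z' z)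
    (hpsd : ∀ (n : ℕ) (x : Fin n → ι),
      (Matrix.of (fun i j => k (x i) (x j)) : Matrix (Fin n) (Fin n) ℝ).PosSemidef)
    (n : ℕ) (x : Fin n → ι) (z₁ z₂ : ι) :
    2 * postCov k σ x z₁ z₂ ≤ postVar k σ x z₁ + postVar k σ x z₂ := by
  set w : Fin 2 → ι := ![z₁, z₂] with hw
  set K : Matrix (Fin n) (Fin n) ℝ := Matrix.of (fun i j => k (x i) (x j)) with hK
  set A : Matrix (Fin n) (Fin n) ℝ := K + σ ^ 2 • 1 with hA
  set B : Matrix (Fin n) (Fin 2) ℝ := Matrix.of (fun i j => k (x i) (w j)) with hB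
  set D : Matrix (Fin 2) (Fin 2) ℝ := Matrix.of (fun i j => k (w i) (w j)) with hD
  -- A is positive definite
  have hone : (σ ^ 2 • (1 : Matrix (Fin n) (Fin n) ℝ)).PosDef := by
    have : σ ^ 2 • (1 : Matrix (Fin n) (Fin n) ℝ) = Matrix.diagonal (fun _ => σ ^ 2) := by
      ext i j
      by_cases h : i = j <;> simp [Matrix.one_apply, Matrix.diagonal_apply, h]
    rw [this, Matrix.posDef_diagonal_iff]
    intro i; positivity
  have hApd : A.PosDef := Matrix.PosDef.posSemidef_add (hpsd n x) hone
  haveI : Invertible A := hApd.isUnit.invertible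
  -- PSD of the big block matrix
  have hbig : (fromBlocks A B Bᴴ D).PosSemidef := by
    have h1 : (fromBlocks K B Bᴴ D).PosSemidef := by
      have h2 := (hpsd (n + 2) (Fin.append x w)).submatrix (finSumFinEquiv (m := n) (n := 2))
      convert h2 using 1
      ext (i | i) (j | j) <;>
        simp [hK, hB, hD, Matrix.submatrix_apply, finSumFinEquiv_apply_left,
          finSumFinEquiv_apply_right, Fin.append_left, Fin.append_right, hsymm (x _) (w _)]
    have h3 : (fromBlocks (σ ^ 2 • (1 : Matrix (Fin n) (Fin n) ℝ)) 0 0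
        (0 : Matrix (Fin 2) (Fin 2) ℝ)).PosSemidef := by
      have : fromBlocks (σ ^ 2 • (1 : Matrix (Fin n) (Fin n) ℝ)) 0 0
          (0 : Matrix (Fin 2) (Fin 2) ℝ) =
          Matrix.diagonal (Sum.elim (fun _ => σ ^ 2) (fun _ => 0)) := by
        ext (i | i) (j | j) <;>
          simp [Matrix.diagonal_apply, Matrix.one_apply, Matrix.smul_apply, mul_ite]
      rw [this, Matrix.posSemidef_diagonal_iff]
      rintro (i | i) <;> simp; positivity
    have : fromBlocks A B Bᴴ D =
        fromBlocks K B Bᴴ D + fromBlocks (σ ^ 2 • (1 : Matrix (Fin n) (Fin n) ℝ)) 0 0 0 := by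
      ext (i | i) (j | j) <;> simp [hA]
    rw [this]
    exact h1.add h3
  have hC : (D - Bᴴ * A⁻¹ * B).PosSemidef := (PosDef.fromBlocks₁₁ B D hApd).mp hbig
  -- entries of the Schur complement are posterior covariances
  have hentry : ∀ i j, (D - Bᴴ * A⁻¹ * B) i j = postCov k σ x (w i) (w j) := by
    intro i j
    have hmul : (Bᴴ * A⁻¹ * B) i j = (fun m => B m i) ⬝ᵥ (A⁻¹ *ᵥ fun l => B l j) := by
      simp only [Matrix.mul_apply, dotProduct, Matrix.mulVec, conjTranspose_apply, star_trivial,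
        Finset.sum_mul, Finset.mul_sum]
      rw [Finset.sum_comm]
      exact Finset.sum_congr rfl fun m _ => Finset.sum_congr rfl fun l _ => by ring
    rw [Matrix.sub_apply, hmul]
    unfold postCov
    rw [← hK, ← hA]
    simp [hB, hD]
  -- symmetry of the Schur complement
  have hsymC : (D - Bᴴ * A⁻¹ * B) 0 1 = (D - Bᴴ * A⁻¹ * B) 1 0 := by
    have h := congrFun (congrFun hC.1 0) 1
    simpa [Matrix.conjTranspose_apply] using h.symm
  -- quadratic form with vector (1, -1)
  have hq := hC.dotProduct_mulVec_nonneg ![1, -1]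
  simp only [dotProduct, Matrix.mulVec, Fin.sum_univ_two, star_trivial,
    Matrix.cons_val_zero, Matrix.cons_val_one, Matrix.head_cons, Pi.star_apply] at hq
  have h00 := hentry 0 0
  have h01 := hentry 0 1
  have h10 := hentry 1 0
  have h11 := hentry 1 1
  have hw0 : w 0 = z₁ := rfl
  have hw1 : w 1 = z₂ := rfl
  simp only [hw0, hw1] at h00 h01 h10 h11
  unfold postVar
  nlinarith [hq, hsymC, h00, h01, h10, h11]
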